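/- Let f = f_1⋯f_k ∈ R = K[x_1,...,x_n] be a squarefree free divisor and suppose there exist derivations E_1,...,E_k of R with E_j(f_i) = δ_{ij} f_i. Then E_1,...,E_k are linearly independent over R inside Der(−log f), and the R-linear map Der(−log f) → ⊕_{i=1}^k R·E_i sending D to Σ_i (D(f_i)/f_i)·E_i splits the inclusion ⊕_i R·E_i ⊆ Der(−log f); its kernel is {D ∈ Der(−log f) : D(f_i) = 0 for all i}. -/

import Mathlib

open MvPolynomial

/-- let `f = f_1⋯f_k` be a squarefree free divisor admitting
derivations `E_1, …, E_k` with `E_j(f_i) = δ_{ij} f_i`. Then the `E_j` are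
linearly independent over `R` inside `Der(−log f)`, and every logarithmic
derivation `D` for `f` decomposes as `D = ∑ c_i • E_i + D'` with
`D(f_i) = c_i f_i` and `D'(f_i) = 0` for all `i` (the map
`D ↦ ∑ (D(f_i)/f_i) • E_i` splits the inclusion `⊕ R E_i ⊆ Der(−log f)`, with
kernel `{D : D(f_i) = 0 for all i}`). -/
theorem stmt_16 {K : Type*} [Field K] [CharZero K] {n k : ℕ}
    (f : Fin k → MvPolynomial (Fin n) K)
    (hred : Squarefree (∏ i, f i))
    (hfree : ∃ A : Matrix (Fin n) (Fin n) (MvPolynomial (Fin n) K),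
      A.det = ∏ i, f i ∧
      ∀ j, (∑ i, pderiv i (∏ l, f l) * A i j) ∈ Ideal.span {∏ l, f l})
    (E : Fin k → Derivation K (MvPolynomial (Fin n) K) (MvPolynomial (Fin n) K))
    (hE : ∀ j i, E j (f i) = if i = j then f i else 0) :
    LinearIndependent (MvPolynomial (Fin n) K) E ∧
    ∀ D : Derivation K (MvPolynomial (Fin n) K) (MvPolynomial (Fin n) K),
      D (∏ i, f i) ∈ Ideal.span {∏ i, f i} →
      ∃ c : Fin k → MvPolynomial (Fin n) K,
        (∀ i, D (f i) = c i * f i) ∧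
        (∀ i, (D - ∑ j, c j • E j) (f i) = 0) := by
  classical
  have hprod0 : (∏ i, f i) ≠ 0 := hred.ne_zero
  have hfi : ∀ i, f i ≠ 0 := fun i h =>
    hprod0 (Finset.prod_eq_zero (Finset.mem_univ i) h)
  have sumapp : ∀ (s : Finset (Fin k))
      (g : Fin k → MvPolynomial (Fin n) K) (x : MvPolynomial (Fin n) K),
      ((∑ j ∈ s, g j • E j) x) = ∑ j ∈ s, g j * E j x := by
    intro s g x
    induction s using Finset.induction with
    | empty => simp
    | insert _ _ hj ih => simp_all [Finset.sum_insert hj]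
  constructor
  · rw [linearIndependent_iff']
    intro s g hg i hi
    have h1 := congrArg (fun D : Derivation K (MvPolynomial (Fin n) K)
        (MvPolynomial (Fin n) K) => D (f i)) hg
    simp only [Derivation.zero_apply] at h1
    rw [sumapp] at h1
    have h2 : ∑ j ∈ s, g j * E j (f i) = g i * f i := by
      rw [Finset.sum_eq_single i]
      · rw [hE i i]; simp
      · intro j hj hji
        rw [hE j i, if_neg (fun h => hji h.symm), mul_zero]
      · intro h; exact absurd hi h
    rw [h2] at h1
    rcases mul_eq_zero.mp h1 with h | h
    · exact h
    · exact absurd h (hfi i)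
  · intro D hD
    have hdvd : ∀ i, f i ∣ D (f i) := by
      intro i
      have hsplit : (∏ l, f l) = f i * ∏ l ∈ Finset.univ.erase i, f l :=
        (Finset.mul_prod_erase Finset.univ f (Finset.mem_univ i)).symm
      have hsq : Squarefree (f i * ∏ l ∈ Finset.univ.erase i, f l) := by
        rwa [← hsplit]
      have hrel : IsRelPrime (f i) (∏ l ∈ Finset.univ.erase i, f l) :=
        (squarefree_mul_iff.mp hsq).1
      have hD' : (∏ i, f i) ∣ D (∏ i, f i) := Ideal.mem_span_singleton.mp hD
      have hfd : f i ∣ D (∏ i, f i) := dvd_trans ⟨_, hsplit⟩ hD'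
      have hleib : D (∏ l, f l) = f i • D (∏ l ∈ Finset.univ.erase i, f l)
          + (∏ l ∈ Finset.univ.erase i, f l) • D (f i) := by
        rw [hsplit, Derivation.leibniz]
      rw [hleib, smul_eq_mul, smul_eq_mul] at hfd
      have hb : f i ∣ (∏ l ∈ Finset.univ.erase i, f l) * D (f i) :=
        (dvd_add_right (Dvd.intro _ rfl)).mp hfd
      exact hrel.dvd_of_dvd_mul_left hb
    choose c hc using hdvd
    refine ⟨c, fun i => by rw [hc i, mul_comm], fun i => ?_⟩
    have : (D - ∑ j, c j • E j) (f i) = D (f i) - (∑ j, c j • E j) (f i) := rfl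
    rw [this, sumapp]
    have h2 : ∑ j, c j * E j (f i) = c i * f i := by
      rw [Finset.sum_eq_single i]
      · rw [hE i i]; simp
      · intro j _ hji
        rw [hE j i, if_neg (fun h => hji h.symm), mul_zero]
      · simp
    rw [h2, hc i, mul_comm, sub_self]
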